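/- Let L be a lattice such that every element of the dimension range of L is directly finite in D(L). Then L is modular. -/
import Mathlib

inductive DimRel (L : Type*) [Lattice L] : Multiset (L × L) → Multiset (L × L) → Prop
  | d0 (a : L) : DimRel L {(a, a)} 0
  | d1 (a b c : L) : a ≤ b → b ≤ c → DimRel L {(a, c)} ({(a, b)} + {(b, c)})
  | d2 (a b : L) : DimRel L {(a, a ⊔ b)} {(a ⊓ b, b)}

def DimMonoid (L : Type*) [Lattice L] : Type _ :=
  (addConGen (DimRel L)).Quotient

instance (L : Type*) [Lattice L] : AddCommMonoid (DimMonoid L) :=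
  inferInstanceAs (AddCommMonoid (addConGen (DimRel L)).Quotient)

def dimDelta {L : Type*} [Lattice L] (a b : L) : DimMonoid L :=
  AddCon.mk' (addConGen (DimRel L)) {(a, b)}

section Aux
variable {L : Type*} [Lattice L]

def DimGood (s : Multiset (L × L)) : Prop := ∀ p ∈ s, p.1 = p.2

lemma dimGood_add {s t : Multiset (L × L)} :
    DimGood (s + t) ↔ DimGood s ∧ DimGood t := by
  constructor
  · intro h
    exact ⟨fun p hp => h p (Multiset.mem_add.2 (Or.inl hp)),
      fun p hp => h p (Multiset.mem_add.2 (Or.inr hp))⟩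
  · rintro ⟨h1, h2⟩ p hp
    rcases Multiset.mem_add.1 hp with h | h
    · exact h1 p h
    · exact h2 p h

lemma dimGood_singleton {a b : L} : DimGood ({(a, b)} : Multiset (L × L)) ↔ a = b := by
  constructor
  · intro h; exact h (a, b) (Multiset.mem_singleton.2 rfl)
  · rintro rfl p hp; rw [Multiset.mem_singleton.1 hp]

lemma dimRel_good {s t : Multiset (L × L)} (h : DimRel L s t) : DimGood s ↔ DimGood t := by
  induction h with
  | d0 a =>
    rw [dimGood_singleton]
    constructor
    · intro _ p hp; simp at hp
    · intro _; rfl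
  | d1 a b c hab hbc =>
    rw [dimGood_add, dimGood_singleton, dimGood_singleton, dimGood_singleton]
    constructor
    · rintro rfl
      have hba : b = a := le_antisymm hbc hab
      exact ⟨hba.symm, hba⟩
    · rintro ⟨rfl, rfl⟩; rfl
  | d2 a b =>
    rw [dimGood_singleton, dimGood_singleton, eq_comm, sup_eq_left, inf_eq_right]

lemma dimConGen_good {s t : Multiset (L × L)} (h : addConGen (DimRel L) s t) :
    DimGood s ↔ DimGood t := by
  induction h with
  | of x y h => exact dimRel_good h
  | refl x => rfl
  | symm _ ih => exact ih.symm
  | trans _ _ ih1 ih2 => exact ih1.trans ih2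
  | add _ _ ih1 ih2 => rw [dimGood_add, dimGood_add, ih1, ih2]

lemma dimDelta_eq_zero {a b : L} (h : dimDelta a b = 0) : a = b := by
  have h0 : (0 : DimMonoid L) = AddCon.mk' (addConGen (DimRel L)) 0 := rfl
  rw [h0, AddCon.mk'] at h
  have := (AddCon.eq _).1 h
  have hg := dimConGen_good this
  rw [dimGood_singleton] at hg
  exact hg.2 (fun p hp => absurd hp (by simp))

lemma dimDelta_d1 {a b c : L} (hab : a ≤ b) (hbc : b ≤ c) :
    dimDelta a c = dimDelta a b + dimDelta b c := by
  have : dimDelta a c = AddCon.mk' (addConGen (DimRel L)) ({(a, b)} + {(b, c)}) :=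
    (AddCon.eq _).2 (AddConGen.Rel.of _ _ (DimRel.d1 a b c hab hbc))
  rw [this, map_add]; rfl

lemma dimDelta_d2 (a b : L) : dimDelta a (a ⊔ b) = dimDelta (a ⊓ b) b :=
  (AddCon.eq _).2 (AddConGen.Rel.of _ _ (DimRel.d2 a b))

end Aux

theorem stmt16 (L : Type*) [Lattice L]
    (hdf : ∀ a b : L, a ≤ b → ∀ x : DimMonoid L, x + dimDelta a b = dimDelta a b → x = 0) :
    IsModularLattice L := by
  constructor
  intro x y z hxz
  set a := x ⊔ y ⊓ z with ha
  set b := (x ⊔ y) ⊓ z with hb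
  have hab : a ≤ b := sup_le (le_inf le_sup_left hxz) (inf_le_inf le_sup_right le_rfl)
  -- a ⊓ y = y ⊓ z ... we show a ⊓ y = b ⊓ y and a ⊔ y = b ⊔ y
  have hinf : a ⊓ y = b ⊓ y := le_antisymm (inf_le_inf hab le_rfl)
    (le_inf (le_sup_of_le_right (le_inf inf_le_right (inf_le_left.trans inf_le_right))) inf_le_right)
  have hsup : a ⊔ y = b ⊔ y := le_antisymm (sup_le_sup hab le_rfl)
    (sup_le (inf_le_left.trans (sup_le_sup le_sup_left le_rfl)) le_sup_right)
  have key : dimDelta a (a ⊔ y) = dimDelta a b + dimDelta b (b ⊔ y) := by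
    rw [hsup]
    exact dimDelta_d1 hab le_sup_left
  rw [dimDelta_d2 a y, dimDelta_d2 b y, hinf] at key
  have := hdf (b ⊓ y) y inf_le_right (dimDelta a b) key.symm
  have hba := dimDelta_eq_zero this
  rw [hba]
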